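/- Let γ(s,t) be an arclength-parametrized inextensible flow of partially null curves in E⁴₁ with partially null Frenet frame {T, N, B₁, B₂}, curvatures k₁, k₂ (k₃ = 0), and flow ∂γ/∂t = β₁T + β₂N + β₃B₁ + β₄B₂ (so ∂β₁/∂s = β₂k₁). Then the first curvature satisfies the evolution equation ∂k₁/∂t = ∂²β₂/∂s² + ∂(β₁k₁)/∂s − ∂(β₄k₂)/∂s − (∂β₄/∂s)k₂. -/

import Mathlib

/-!
Formalization of inextensible flows of partially null / pseudo null curves in
Minkowski space-time `E⁴₁` (ℝ⁴ with signature (-,+,+,+)).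
-/

noncomputable section

/-- The Minkowski bilinear form on `ℝ⁴` with signature `(-,+,+,+)`. -/
def mink (v w : Fin 4 → ℝ) : ℝ :=
  -(v 0 * w 0) + v 1 * w 1 + v 2 * w 2 + v 3 * w 3

/-- The Minkowski norm `‖v‖ = √|⟨v,v⟩|`. -/
def mnorm (v : Fin 4 → ℝ) : ℝ := Real.sqrt |mink v v|

section helpers

variable {F : Type*} [NormedAddCommGroup F] [NormedSpace ℝ F]

/-- partial derivative in the first slot, as an fderiv application -/
lemma pd1 {f : ℝ → ℝ → F} (hf : ContDiff ℝ (⊤ : ℕ∞) (fun p : ℝ × ℝ => f p.1 p.2))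
    (s t : ℝ) :
    HasDerivAt (fun x => f x t)
      (fderiv ℝ (fun p : ℝ × ℝ => f p.1 p.2) (s, t) (1, 0)) s := by
  have h1 : HasDerivAt (fun x : ℝ => ((x, t) : ℝ × ℝ)) (1, 0) s :=
    (hasDerivAt_id s).prodMk (hasDerivAt_const s t)
  exact ((hf.differentiable (by simp) (s, t)).hasFDerivAt).comp_hasDerivAt s h1

lemma pd2 {f : ℝ → ℝ → F} (hf : ContDiff ℝ (⊤ : ℕ∞) (fun p : ℝ × ℝ => f p.1 p.2))
    (s t : ℝ) :
    HasDerivAt (fun x => f s x)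
      (fderiv ℝ (fun p : ℝ × ℝ => f p.1 p.2) (s, t) (0, 1)) t := by
  have h1 : HasDerivAt (fun x : ℝ => ((s, x) : ℝ × ℝ)) (0, 1) t :=
    (hasDerivAt_const t s).prodMk (hasDerivAt_id t)
  exact ((hf.differentiable (by simp) (s, t)).hasFDerivAt).comp_hasDerivAt t h1

lemma hd1 {f : ℝ → ℝ → F} (hf : ContDiff ℝ (⊤ : ℕ∞) (fun p : ℝ × ℝ => f p.1 p.2))
    (s t : ℝ) :
    HasDerivAt (fun x => f x t) (deriv (fun x => f x t) s) s :=
  (pd1 hf s t).differentiableAt.hasDerivAt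

lemma hd2 {f : ℝ → ℝ → F} (hf : ContDiff ℝ (⊤ : ℕ∞) (fun p : ℝ × ℝ => f p.1 p.2))
    (s t : ℝ) :
    HasDerivAt (fun x => f s x) (deriv (fun x => f s x) t) t :=
  (pd2 hf s t).differentiableAt.hasDerivAt

/-- the function `τ ↦ ∂f/∂s (s, τ)` is differentiable -/
lemma hdMix {f : ℝ → ℝ → F} (hf : ContDiff ℝ (⊤ : ℕ∞) (fun p : ℝ × ℝ => f p.1 p.2))
    (s t : ℝ) :
    HasDerivAt (fun τ => deriv (fun σ => f σ τ) s)
      (deriv (fun τ => deriv (fun σ => f σ τ) s) t) t := by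
  have heq : (fun τ => deriv (fun σ => f σ τ) s)
      = fun τ => fderiv ℝ (fun p : ℝ × ℝ => f p.1 p.2) (s, τ) (1, 0) :=
    funext fun τ => (pd1 hf s τ).deriv
  rw [heq]
  have h1 : ContDiff ℝ (⊤ : ℕ∞) (fun τ : ℝ => fderiv ℝ (fun p : ℝ × ℝ => f p.1 p.2) (s, τ)) :=
    (hf.fderiv_right (by exact_mod_cast le_top)).comp (contDiff_const.prodMk contDiff_id)
  have h2 : ContDiff ℝ (⊤ : ℕ∞)
      (fun τ : ℝ => fderiv ℝ (fun p : ℝ × ℝ => f p.1 p.2) (s, τ) (1, 0)) :=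
    (ContinuousLinearMap.apply ℝ F ((1 : ℝ), (0 : ℝ))).contDiff.comp h1
  exact (h2.differentiable (by simp) t).hasDerivAt

/-- the one-variable section is smooth -/
lemma sect1 {f : ℝ → ℝ → F} (hf : ContDiff ℝ (⊤ : ℕ∞) (fun p : ℝ × ℝ => f p.1 p.2))
    (t : ℝ) : ContDiff ℝ (⊤ : ℕ∞) (fun σ => f σ t) :=
  hf.comp (contDiff_id.prodMk contDiff_const)

/-- second derivative in the first slot exists -/
lemma hd11 {f : ℝ → ℝ → F} (hf : ContDiff ℝ (⊤ : ℕ∞) (fun p : ℝ × ℝ => f p.1 p.2))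
    (s t : ℝ) :
    HasDerivAt (fun σ => deriv (fun x => f x t) σ)
      (deriv (fun σ => deriv (fun x => f x t) σ) s) s := by
  have := (contDiff_infty_iff_deriv.1 (sect1 hf t)).2
  exact ((this.differentiable (by simp)) s).hasDerivAt

/-- Clairaut / symmetry of mixed partial derivatives for smooth functions -/
lemma clairaut {f : ℝ → ℝ → F} (hf : ContDiff ℝ (⊤ : ℕ∞) (fun p : ℝ × ℝ => f p.1 p.2))
    (s t : ℝ) :
    deriv (fun τ => deriv (fun σ => f σ τ) s) t
      = deriv (fun σ => deriv (fun τ => f σ τ) t) s := by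
  set f2 : ℝ × ℝ → F := fun p => f p.1 p.2 with hf2
  have hdiff : ∀ y, HasFDerivAt f2 (fderiv ℝ f2 y) y :=
    fun y => (hf.differentiable (by simp) y).hasFDerivAt
  have hfd : ContDiff ℝ (⊤ : ℕ∞) (fderiv ℝ f2) := hf.fderiv_right (by exact_mod_cast le_top)
  have hsymm : ∀ u v : ℝ × ℝ,
      fderiv ℝ (fderiv ℝ f2) (s, t) u v = fderiv ℝ (fderiv ℝ f2) (s, t) v u :=
    second_derivative_symmetric hdiff ((hfd.differentiable (by simp) (s, t)).hasFDerivAt)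
  have key : ∀ u v : ℝ × ℝ,
      deriv (fun τ => fderiv ℝ f2 (s, τ) u) t = fderiv ℝ (fderiv ℝ f2) (s, t) (0, 1) u := by
    intro u v
    have h1 : HasDerivAt (fun τ : ℝ => fderiv ℝ f2 (s, τ))
        (fderiv ℝ (fderiv ℝ f2) (s, t) (0, 1)) t := by
      have hline : HasDerivAt (fun x : ℝ => ((s, x) : ℝ × ℝ)) (0, 1) t :=
        (hasDerivAt_const t s).prodMk (hasDerivAt_id t)
      exact ((hfd.differentiable (by simp) (s, t)).hasFDerivAt).comp_hasDerivAt t hline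
    have h2 := ((ContinuousLinearMap.apply ℝ F u).hasFDerivAt).comp_hasDerivAt t h1
    simpa [Function.comp_def] using h2.deriv
  have key' : ∀ u : ℝ × ℝ,
      deriv (fun σ => fderiv ℝ f2 (σ, t) u) s = fderiv ℝ (fderiv ℝ f2) (s, t) (1, 0) u := by
    intro u
    have h1 : HasDerivAt (fun σ : ℝ => fderiv ℝ f2 (σ, t))
        (fderiv ℝ (fderiv ℝ f2) (s, t) (1, 0)) s := by
      have hline : HasDerivAt (fun x : ℝ => ((x, t) : ℝ × ℝ)) (1, 0) s :=
        (hasDerivAt_id s).prodMk (hasDerivAt_const s t)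
      exact ((hfd.differentiable (by simp) (s, t)).hasFDerivAt).comp_hasDerivAt s hline
    have h2 := ((ContinuousLinearMap.apply ℝ F u).hasFDerivAt).comp_hasDerivAt s h1
    simpa [Function.comp_def] using h2.deriv
  have e1 : (fun τ => deriv (fun σ => f σ τ) s) = fun τ => fderiv ℝ f2 (s, τ) (1, 0) :=
    funext fun τ => (pd1 hf s τ).deriv
  have e2 : (fun σ => deriv (fun τ => f σ τ) t) = fun σ => fderiv ℝ f2 (σ, t) (0, 1) :=
    funext fun σ => (pd2 hf σ t).deriv
  rw [e1, e2, key (1,0) (1,0), key' (0,1), hsymm]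

/-- derivative of a Minkowski product -/
lemma mink_hasDerivAt {f g : ℝ → Fin 4 → ℝ} {f' g' : Fin 4 → ℝ} {x : ℝ}
    (hf : HasDerivAt f f' x) (hg : HasDerivAt g g' x) :
    HasDerivAt (fun x => mink (f x) (g x)) (mink f' (g x) + mink (f x) g') x := by
  have hfc : ∀ i, HasDerivAt (fun s => f s i) (f' i) x := fun i => hasDerivAt_pi.1 hf i
  have hgc : ∀ i, HasDerivAt (fun s => g s i) (g' i) x := fun i => hasDerivAt_pi.1 hg i
  have h := ((((hfc 0).mul (hgc 0)).neg.add ((hfc 1).mul (hgc 1))).add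
      ((hfc 2).mul (hgc 2))).add ((hfc 3).mul (hgc 3))
  convert h using 1
  · rfl
  · rfl
  · funext y; simp [mink]
  · simp [mink]; ring

lemma mink_smul_left (a : ℝ) (u w : Fin 4 → ℝ) : mink (a • u) w = a * mink u w := by
  simp [mink]; ring

lemma mink_comm (u w : Fin 4 → ℝ) : mink u w = mink w u := by
  simp [mink]; ring

lemma mink_add_left (u v w : Fin 4 → ℝ) : mink (u + v) w = mink u w + mink v w := by
  simp [mink]; ring

lemma mink_zero_left (w : Fin 4 → ℝ) : mink 0 w = 0 := by simp [mink]

end helpers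

theorem curvature_evolution_k1_partially_null
    (γ T N B₁ B₂ : ℝ → ℝ → (Fin 4 → ℝ))
    (k₁ k₂ β₁ β₂ β₃ β₄ : ℝ → ℝ → ℝ)
    (hγsmooth : ContDiff ℝ (⊤ : ℕ∞) (fun p : ℝ × ℝ => γ p.1 p.2))
    (hTsmooth : ContDiff ℝ (⊤ : ℕ∞) (fun p : ℝ × ℝ => T p.1 p.2))
    (hNsmooth : ContDiff ℝ (⊤ : ℕ∞) (fun p : ℝ × ℝ => N p.1 p.2))
    (hB₁smooth : ContDiff ℝ (⊤ : ℕ∞) (fun p : ℝ × ℝ => B₁ p.1 p.2))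
    (hB₂smooth : ContDiff ℝ (⊤ : ℕ∞) (fun p : ℝ × ℝ => B₂ p.1 p.2))
    (hk₁smooth : ContDiff ℝ (⊤ : ℕ∞) (fun p : ℝ × ℝ => k₁ p.1 p.2))
    (hk₂smooth : ContDiff ℝ (⊤ : ℕ∞) (fun p : ℝ × ℝ => k₂ p.1 p.2))
    (hβ₁smooth : ContDiff ℝ (⊤ : ℕ∞) (fun p : ℝ × ℝ => β₁ p.1 p.2))
    (hβ₂smooth : ContDiff ℝ (⊤ : ℕ∞) (fun p : ℝ × ℝ => β₂ p.1 p.2))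
    (hβ₃smooth : ContDiff ℝ (⊤ : ℕ∞) (fun p : ℝ × ℝ => β₃ p.1 p.2))
    (hβ₄smooth : ContDiff ℝ (⊤ : ℕ∞) (fun p : ℝ × ℝ => β₄ p.1 p.2))
    (hTT : ∀ s t : ℝ, mink (T s t) (T s t) = 1)
    (hNN : ∀ s t : ℝ, mink (N s t) (N s t) = 1)
    (hB₁B₁ : ∀ s t : ℝ, mink (B₁ s t) (B₁ s t) = 0)
    (hB₂B₂ : ∀ s t : ℝ, mink (B₂ s t) (B₂ s t) = 0)
    (hB₁B₂ : ∀ s t : ℝ, mink (B₁ s t) (B₂ s t) = 1)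
    (hTN : ∀ s t : ℝ, mink (T s t) (N s t) = 0)
    (hTB₁ : ∀ s t : ℝ, mink (T s t) (B₁ s t) = 0)
    (hTB₂ : ∀ s t : ℝ, mink (T s t) (B₂ s t) = 0)
    (hNB₁ : ∀ s t : ℝ, mink (N s t) (B₁ s t) = 0)
    (hNB₂ : ∀ s t : ℝ, mink (N s t) (B₂ s t) = 0)
    -- arclength parametrization and Frenet equations (k₃ = 0)
    (hT : ∀ s t : ℝ, T s t = deriv (fun x => γ x t) s)
    (hunit : ∀ s t : ℝ, mnorm (deriv (fun x => γ x t) s) = 1)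
    (hfr₁ : ∀ s t : ℝ, deriv (fun x => T x t) s = k₁ s t • N s t)
    (hfr₂ : ∀ s t : ℝ, deriv (fun x => N x t) s = -(k₁ s t) • T s t + k₂ s t • B₁ s t)
    (hfr₃ : ∀ s t : ℝ, deriv (fun x => B₁ x t) s = 0)
    (hfr₄ : ∀ s t : ℝ, deriv (fun x => B₂ x t) s = -(k₂ s t) • N s t)
    (hflow : ∀ s t : ℝ, deriv (fun x => γ s x) t =
      β₁ s t • T s t + β₂ s t • N s t + β₃ s t • B₁ s t + β₄ s t • B₂ s t)
    -- inextensibility: ∂β₁/∂s = β₂k₁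
    (hinext : ∀ s t : ℝ, deriv (fun x => β₁ x t) s = β₂ s t * k₁ s t) :
    ∀ s t : ℝ, deriv (fun x => k₁ s x) t =
      deriv (fun x => deriv (fun y => β₂ y t) x) s + deriv (fun x => β₁ x t * k₁ x t) s -
      deriv (fun x => β₄ x t * k₂ x t) s - deriv (fun x => β₄ x t) s * k₂ s t := by
  intro s t
  -- Step 1: the t-derivative of T, via two applications of Clairaut and the flow equation
  have hV : ∀ σ : ℝ, deriv (fun τ => T σ τ) t =
      (β₁ σ t * k₁ σ t + deriv (fun x => β₂ x t) σ - β₄ σ t * k₂ σ t) • N σ t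
      + (β₂ σ t * k₂ σ t + deriv (fun x => β₃ x t) σ) • B₁ σ t
      + (deriv (fun x => β₄ x t) σ) • B₂ σ t := by
    intro σ
    have e1 : (fun τ => T σ τ) = fun τ => deriv (fun x => γ x τ) σ :=
      funext fun τ => hT σ τ
    rw [e1, clairaut (f := γ) hγsmooth σ t]
    have e2 : (fun x => deriv (fun τ => γ x τ) t)
        = fun x => β₁ x t • T x t + β₂ x t • N x t + β₃ x t • B₁ x t + β₄ x t • B₂ x t :=
      funext fun x => hflow x t
    rw [e2]
    have hTσ : HasDerivAt (fun x => T x t) (k₁ σ t • N σ t) σ := by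
      have := hd1 (f := T) hTsmooth σ t; rwa [hfr₁] at this
    have hNσ : HasDerivAt (fun x => N x t) (-(k₁ σ t) • T σ t + k₂ σ t • B₁ σ t) σ := by
      have := hd1 (f := N) hNsmooth σ t; rwa [hfr₂] at this
    have hB₁σ : HasDerivAt (fun x => B₁ x t) 0 σ := by
      have := hd1 (f := B₁) hB₁smooth σ t; rwa [hfr₃] at this
    have hB₂σ : HasDerivAt (fun x => B₂ x t) (-(k₂ σ t) • N σ t) σ := by
      have := hd1 (f := B₂) hB₂smooth σ t; rwa [hfr₄] at this
    have hb1 : HasDerivAt (fun x => β₁ x t) (β₂ σ t * k₁ σ t) σ := by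
      have := hd1 (f := β₁) hβ₁smooth σ t; rwa [hinext] at this
    have hb2 := hd1 (f := β₂) hβ₂smooth σ t
    have hb3 := hd1 (f := β₃) hβ₃smooth σ t
    have hb4 := hd1 (f := β₄) hβ₄smooth σ t
    have h := (((hb1.smul hTσ).add (hb2.smul hNσ)).add (hb3.smul hB₁σ)).add (hb4.smul hB₂σ)
    rw [HasDerivAt.deriv (f := fun x => β₁ x t • T x t + β₂ x t • N x t + β₃ x t • B₁ x t + β₄ x t • B₂ x t) h]
    module
  -- Step 2: express k₁ through the Minkowski product
  have hk₁eq : (fun τ => k₁ s τ) = fun τ => mink (deriv (fun x => T x τ) s) (N s τ) := by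
    funext τ
    rw [hfr₁, mink_smul_left, hNN, mul_one]
  rw [hk₁eq]
  -- Step 3: differentiate the product
  have hMixT : HasDerivAt (fun τ => deriv (fun σ => T σ τ) s)
      (deriv (fun τ => deriv (fun σ => T σ τ) s) t) t := hdMix (f := T) hTsmooth s t
  have hNt : HasDerivAt (fun τ => N s τ) (deriv (fun τ => N s τ) t) t :=
    hd2 (f := N) hNsmooth s t
  have hprod := mink_hasDerivAt hMixT hNt
  rw [hprod.deriv]
  -- the second term vanishes
  have hNN0 : mink (N s t) (deriv (fun τ => N s τ) t) = 0 := by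
    have h1 := mink_hasDerivAt hNt hNt
    have h2 : HasDerivAt (fun τ => mink (N s τ) (N s τ)) 0 t := by
      have e : (fun τ => mink (N s τ) (N s τ)) = fun _ => (1 : ℝ) :=
        funext fun τ => hNN s τ
      rw [e]; exact hasDerivAt_const t 1
    have h3 := h1.unique h2
    rw [mink_comm (deriv (fun τ => N s τ) t) (N s t)] at h3
    linarith
  -- Step 4: compute the mixed partial via Clairaut on T and hV
  have hVfun : (fun σ => deriv (fun τ => T σ τ) t) = fun σ =>
      (β₁ σ t * k₁ σ t + deriv (fun x => β₂ x t) σ - β₄ σ t * k₂ σ t) • N σ t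
      + (β₂ σ t * k₂ σ t + deriv (fun x => β₃ x t) σ) • B₁ σ t
      + (deriv (fun x => β₄ x t) σ) • B₂ σ t := funext hV
  have hmixeq : deriv (fun τ => deriv (fun σ => T σ τ) s) t
      = deriv (fun σ =>
        (β₁ σ t * k₁ σ t + deriv (fun x => β₂ x t) σ - β₄ σ t * k₂ σ t) • N σ t
        + (β₂ σ t * k₂ σ t + deriv (fun x => β₃ x t) σ) • B₁ σ t
        + (deriv (fun x => β₄ x t) σ) • B₂ σ t) s := by
    rw [clairaut (f := T) hTsmooth s t, hVfun]
  -- differentiate the explicit expression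
  have hA : HasDerivAt
      (fun σ => β₁ σ t * k₁ σ t + deriv (fun x => β₂ x t) σ - β₄ σ t * k₂ σ t)
      (deriv (fun x => β₁ x t * k₁ x t) s + deriv (fun x => deriv (fun y => β₂ y t) x) s
        - deriv (fun x => β₄ x t * k₂ x t) s) s := by
    have h1 : HasDerivAt (fun σ => β₁ σ t * k₁ σ t) (deriv (fun x => β₁ x t * k₁ x t) s) s :=
      (((hd1 (f := β₁) hβ₁smooth s t).differentiableAt).mul
        ((hd1 (f := k₁) hk₁smooth s t).differentiableAt)).hasDerivAt
    have h2 := hd11 (f := β₂) hβ₂smooth s t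
    have h3 : HasDerivAt (fun σ => β₄ σ t * k₂ σ t) (deriv (fun x => β₄ x t * k₂ x t) s) s :=
      (((hd1 (f := β₄) hβ₄smooth s t).differentiableAt).mul
        ((hd1 (f := k₂) hk₂smooth s t).differentiableAt)).hasDerivAt
    exact (h1.add h2).sub h3
  have hC : HasDerivAt (fun σ => β₂ σ t * k₂ σ t + deriv (fun x => β₃ x t) σ)
      (deriv (fun x => β₂ x t * k₂ x t) s + deriv (fun x => deriv (fun y => β₃ y t) x) s) s := by
    have h1 : HasDerivAt (fun σ => β₂ σ t * k₂ σ t) (deriv (fun x => β₂ x t * k₂ x t) s) s :=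
      (((hd1 (f := β₂) hβ₂smooth s t).differentiableAt).mul
        ((hd1 (f := k₂) hk₂smooth s t).differentiableAt)).hasDerivAt
    exact h1.add (hd11 (f := β₃) hβ₃smooth s t)
  have hb4' := hd11 (f := β₄) hβ₄smooth s t
  have hTs : HasDerivAt (fun x => T x t) (k₁ s t • N s t) s := by
    have := hd1 (f := T) hTsmooth s t; rwa [hfr₁] at this
  have hNs : HasDerivAt (fun x => N x t) (-(k₁ s t) • T s t + k₂ s t • B₁ s t) s := by
    have := hd1 (f := N) hNsmooth s t; rwa [hfr₂] at this
  have hB₁s : HasDerivAt (fun x => B₁ x t) 0 s := by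
    have := hd1 (f := B₁) hB₁smooth s t; rwa [hfr₃] at this
  have hB₂s : HasDerivAt (fun x => B₂ x t) (-(k₂ s t) • N s t) s := by
    have := hd1 (f := B₂) hB₂smooth s t; rwa [hfr₄] at this
  have hBig := ((hA.smul hNs).add (hC.smul hB₁s)).add (hb4'.smul hB₂s)
  rw [hmixeq, HasDerivAt.deriv (f := fun σ =>
          (β₁ σ t * k₁ σ t + deriv (fun x => β₂ x t) σ - β₄ σ t * k₂ σ t) • N σ t
          + (β₂ σ t * k₂ σ t + deriv (fun x => β₃ x t) σ) • B₁ σ t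
          + (deriv (fun x => β₄ x t) σ) • B₂ σ t) hBig]
  -- Step 5: take the Minkowski product with N and simplify
  have hB₁N : mink (B₁ s t) (N s t) = 0 := by rw [mink_comm]; exact hNB₁ s t
  have hB₂N : mink (B₂ s t) (N s t) = 0 := by rw [mink_comm]; exact hNB₂ s t
  rw [hfr₁, mink_smul_left, hNN0, mul_zero, add_zero]
  simp only [mink_add_left, mink_smul_left, mink_zero_left, hNN, hTN, hB₁N, hB₂N,
    mul_zero, mul_one, add_zero, zero_add]
  ring
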